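/- Let (X, μ, T) be a probability-preserving system with decay of correlations against Lipschitz observables: |∫ φψ∘T^n dμ − ∫φ dμ ∫ψ dμ| ≤ C θ^n ‖φ‖_Lip ‖ψ‖_Lip for some C > 0, 0 < θ < 1. Let U_n be measurable sets admitting Lipschitz functions Φ_n with 0 ≤ Φ_n ≤ 1, ‖Φ_n‖_Lip ≤ n^{2/ξ}, {Φ_n ≠ 1_{U_n}} ⊆ A_n with μ(A_n) ≤ C n^{−2}, and n μ(U_n) → 1. Then lim_{n→∞} n ∑_{j=⌈(log n)^5⌉}^{⌊√n⌋} μ(U_n ∩ T^{−j}U_n) = 0. -/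

import Mathlib

open MeasureTheory Filter

theorem stmt13 {X : Type*} [MetricSpace X] [MeasurableSpace X] [BorelSpace X]
    (μ : Measure X) [IsProbabilityMeasure μ] (T : X → X) (hT : MeasurePreserving T μ μ)
    (C θ ξ : ℝ) (hC : 0 < C) (hθ0 : 0 < θ) (hθ1 : θ < 1) (hξ : 0 < ξ)
    -- decay of correlations against Lipschitz observables: for any observables
    -- `φ, ψ` whose Lipschitz norms (sup norm plus Lipschitz constant) are bounded
    -- by `Kφ` and `Kψ` respectively
    (hDC : ∀ (φ ψ : X → ℝ) (Kφ Kψ : ℝ), 0 ≤ Kφ → 0 ≤ Kψ →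
      LipschitzWith (Real.toNNReal Kφ) φ → (∀ x, |φ x| ≤ Kφ) →
      LipschitzWith (Real.toNNReal Kψ) ψ → (∀ x, |ψ x| ≤ Kψ) →
      ∀ n : ℕ, |(∫ x, φ x * ψ (T^[n] x) ∂μ) - (∫ x, φ x ∂μ) * ∫ x, ψ x ∂μ| ≤
        C * θ ^ n * Kφ * Kψ)
    (U A : ℕ → Set X) (hUm : ∀ n, MeasurableSet (U n)) (hAm : ∀ n, MeasurableSet (A n))
    (Φ : ℕ → X → ℝ)
    (hΦ01 : ∀ n x, 0 ≤ Φ n x ∧ Φ n x ≤ 1)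
    (hΦLip : ∀ n : ℕ, LipschitzWith (Real.toNNReal ((n : ℝ) ^ (2 / ξ))) (Φ n))
    (hΦbd : ∀ n x, |Φ n x| ≤ (n : ℝ) ^ (2 / ξ))
    (hagree : ∀ n, {x | Φ n x ≠ (U n).indicator (fun _ => (1 : ℝ)) x} ⊆ A n)
    (hA : ∀ n : ℕ, (μ (A n)).toReal ≤ C * (n : ℝ) ^ (-2 : ℝ))
    (hU1 : Tendsto (fun n : ℕ => (n : ℝ) * (μ (U n)).toReal) atTop (nhds 1)) :
    Tendsto (fun n : ℕ => (n : ℝ) *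
        ∑ j ∈ Finset.Icc ⌈(Real.log n) ^ 5⌉₊ ⌊Real.sqrt n⌋₊,
          (μ (U n ∩ T^[j] ⁻¹' U n)).toReal) atTop (nhds 0) := by
  -- notation
  set u : ℕ → ℝ := fun n => (μ (U n)).toReal with hu
  set a : ℕ → ℝ := fun n => (μ (A n)).toReal with ha
  set K : ℕ → ℝ := fun n => (n : ℝ) ^ (2 / ξ) with hK
  have hK0 : ∀ n, 0 ≤ K n := fun n => Real.rpow_nonneg (Nat.cast_nonneg n) _
  have hTm : ∀ j : ℕ, Measurable (T^[j]) := fun j => hT.measurable.iterate j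
  have hint_bdd : ∀ (h : X → ℝ) (B : ℝ), Measurable h → (∀ x, |h x| ≤ B) → Integrable h μ := by
    intro h B hm hb
    exact ⟨hm.aestronglyMeasurable,
      HasFiniteIntegral.of_bounded (C := B) (Eventually.of_forall fun x => by
        simpa [Real.norm_eq_abs] using hb x)⟩
  have hu01 : ∀ n, 0 ≤ u n ∧ u n ≤ 1 := by
    intro n
    refine ⟨ENNReal.toReal_nonneg, ?_⟩
    have : μ (U n) ≤ 1 := prob_le_one
    calc (μ (U n)).toReal ≤ (1 : ENNReal).toReal :=
          ENNReal.toReal_mono ENNReal.one_ne_top this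
      _ = 1 := by simp
  have ha01 : ∀ n, 0 ≤ a n ∧ a n ≤ 1 := by
    intro n
    refine ⟨ENNReal.toReal_nonneg, ?_⟩
    have : μ (A n) ≤ 1 := prob_le_one
    calc (μ (A n)).toReal ≤ (1 : ENNReal).toReal :=
          ENNReal.toReal_mono ENNReal.one_ne_top this
      _ = 1 := by simp
  -- key per-term bound
  have key : ∀ n j : ℕ, (μ (U n ∩ T^[j] ⁻¹' U n)).toReal ≤
      u n ^ 2 + C * θ ^ j * K n ^ 2 + 5 * (C * (n : ℝ) ^ (-2 : ℝ)) := by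
    intro n j
    set f : X → ℝ := (U n).indicator (fun _ => (1 : ℝ)) with hf
    set g : X → ℝ := (A n).indicator (fun _ => (1 : ℝ)) with hg
    have hf01 : ∀ y, 0 ≤ f y ∧ f y ≤ 1 := by
      intro y; by_cases h : y ∈ U n <;> simp [hf, Set.indicator_apply, h]
    have hg01 : ∀ y, 0 ≤ g y ∧ g y ≤ 1 := by
      intro y; by_cases h : y ∈ A n <;> simp [hg, Set.indicator_apply, h]
    have hgA : ∀ y, y ∈ A n → g y = 1 := by
      intro y hy; simp [hg, Set.indicator_apply, hy]
    have hΦf : ∀ y, y ∉ A n → Φ n y = f y := by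
      intro y hy
      by_contra h
      exact hy (hagree n h)
    have mf : Measurable f := measurable_const.indicator (hUm n)
    have mg : Measurable g := measurable_const.indicator (hAm n)
    have mΦ : Measurable (Φ n) := (hΦLip n).continuous.measurable
    have hUT : MeasurableSet (U n ∩ T^[j] ⁻¹' U n) := (hUm n).inter ((hTm j) (hUm n))
    -- measure as integral
    have h1 : (μ (U n ∩ T^[j] ⁻¹' U n)).toReal = ∫ x, f x * f (T^[j] x) ∂μ := by
      rw [← measureReal_def, ← integral_indicator_one hUT]
      refine integral_congr_ae (Eventually.of_forall fun x => ?_)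
      by_cases h1 : x ∈ U n <;> by_cases h2 : T^[j] x ∈ U n <;>
        simp [hf, Set.indicator_apply, h1, h2, Set.mem_preimage]
    -- pointwise bound
    have hpt : ∀ x, f x * f (T^[j] x) ≤ Φ n x * Φ n (T^[j] x) + g x + g (T^[j] x) := by
      intro x
      have hΦnn : 0 ≤ Φ n x * Φ n (T^[j] x) :=
        mul_nonneg (hΦ01 n x).1 (hΦ01 n _).1
      by_cases h1 : x ∈ A n
      · have : f x * f (T^[j] x) ≤ 1 := by
          nlinarith [(hf01 x).1, (hf01 x).2, (hf01 (T^[j] x)).1, (hf01 (T^[j] x)).2]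
        have := hgA x h1
        nlinarith [(hg01 (T^[j] x)).1]
      · have e1 : Φ n x = f x := hΦf x h1
        by_cases h2 : T^[j] x ∈ A n
        · have : f x * f (T^[j] x) ≤ 1 := by
            nlinarith [(hf01 x).1, (hf01 x).2, (hf01 (T^[j] x)).1, (hf01 (T^[j] x)).2]
          have := hgA _ h2
          nlinarith [(hg01 x).1]
        · have e2 : Φ n (T^[j] x) = f (T^[j] x) := hΦf _ h2
          rw [e1, e2] at hΦnn ⊢
          nlinarith [(hg01 x).1, (hg01 (T^[j] x)).1]
    -- integrability
    have intf : Integrable (fun x => f x * f (T^[j] x)) μ := by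
      refine hint_bdd _ 1 (mf.mul (mf.comp (hTm j))) (fun x => ?_)
      rw [abs_mul]
      nlinarith [(hf01 x).1, (hf01 x).2, (hf01 (T^[j] x)).1, (hf01 (T^[j] x)).2,
        abs_of_nonneg (hf01 x).1, abs_of_nonneg (hf01 (T^[j] x)).1]
    have intΦΦ : Integrable (fun x => Φ n x * Φ n (T^[j] x)) μ := by
      refine hint_bdd _ 1 (mΦ.mul (mΦ.comp (hTm j))) (fun x => ?_)
      rw [abs_mul]
      nlinarith [(hΦ01 n x).1, (hΦ01 n x).2, (hΦ01 n (T^[j] x)).1, (hΦ01 n (T^[j] x)).2,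
        abs_of_nonneg (hΦ01 n x).1, abs_of_nonneg (hΦ01 n (T^[j] x)).1]
    have intg : Integrable g μ := by
      refine hint_bdd _ 1 mg (fun x => ?_)
      rw [abs_of_nonneg (hg01 x).1]; exact (hg01 x).2
    have intgT : Integrable (fun x => g (T^[j] x)) μ := by
      refine hint_bdd _ 1 (mg.comp (hTm j)) (fun x => ?_)
      rw [abs_of_nonneg (hg01 _).1]; exact (hg01 _).2
    have intΦ : Integrable (Φ n) μ := by
      refine hint_bdd _ 1 mΦ (fun x => ?_)
      rw [abs_of_nonneg (hΦ01 n x).1]; exact (hΦ01 n x).2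
    have intfU : Integrable f μ := by
      refine hint_bdd _ 1 mf (fun x => ?_)
      rw [abs_of_nonneg (hf01 x).1]; exact (hf01 x).2
    -- integral comparison
    have h2 : ∫ x, f x * f (T^[j] x) ∂μ ≤
        (∫ x, Φ n x * Φ n (T^[j] x) ∂μ) + a n + a n := by
      have hmap := (hT.iterate j).map_eq
      have hgc : ∫ x, g (T^[j] x) ∂μ = ∫ x, g x ∂μ := by
        rw [← integral_map (hTm j).aemeasurable]
        · rw [hmap]
        · rw [hmap]; exact mg.aestronglyMeasurable
      have hga : ∫ x, g x ∂μ = a n := integral_indicator_one (hAm n)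
      have intsum : Integrable (fun x => Φ n x * Φ n (T^[j] x) + g x) μ := intΦΦ.add intg
      have intsum2 : Integrable (fun x => Φ n x * Φ n (T^[j] x) + g x + g (T^[j] x)) μ :=
        intsum.add intgT
      calc ∫ x, f x * f (T^[j] x) ∂μ
          ≤ ∫ x, (Φ n x * Φ n (T^[j] x) + g x + g (T^[j] x)) ∂μ :=
            integral_mono intf intsum2 hpt
        _ = (∫ x, Φ n x * Φ n (T^[j] x) ∂μ) + (∫ x, g x ∂μ) + ∫ x, g (T^[j] x) ∂μ := by
            rw [integral_add intsum intgT, integral_add intΦΦ intg]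
        _ = (∫ x, Φ n x * Φ n (T^[j] x) ∂μ) + a n + a n := by rw [hga, hgc, hga]
    -- decay of correlations
    have hdc := hDC (Φ n) (Φ n) (K n) (K n) (hK0 n) (hK0 n) (hΦLip n) (hΦbd n)
      (hΦLip n) (hΦbd n) j
    rw [abs_le] at hdc
    -- ∫ Φ ≤ u + a
    have hΦs : ∫ x, Φ n x ∂μ ≤ u n + a n := by
      have hfs : ∫ x, f x ∂μ = u n := integral_indicator_one (hUm n)
      have hga : ∫ x, g x ∂μ = a n := integral_indicator_one (hAm n)
      calc ∫ x, Φ n x ∂μ ≤ ∫ x, (f x + g x) ∂μ := by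
            refine integral_mono intΦ (intfU.add intg) (fun x => ?_)
            by_cases h1 : x ∈ A n
            · have := hgA x h1
              nlinarith [(hΦ01 n x).2, (hf01 x).1]
            · have := hΦf x h1
              nlinarith [(hg01 x).1]
        _ = u n + a n := by
            have intfg : Integrable (fun x => f x + g x) μ := intfU.add intg
            rw [integral_add intfU intg, hfs, hga]
    have hΦs0 : 0 ≤ ∫ x, Φ n x ∂μ := integral_nonneg (fun x => (hΦ01 n x).1)
    have hθj : 0 ≤ C * θ ^ j * K n * K n :=
      mul_nonneg (mul_nonneg (mul_nonneg hC.le (pow_nonneg hθ0.le j)) (hK0 n)) (hK0 n)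
    have hAn := hA n
    have hP2 : (∫ x, Φ n x ∂μ) * ∫ x, Φ n x ∂μ ≤ u n ^ 2 + 3 * a n := by
      nlinarith [(hu01 n).1, (hu01 n).2, (ha01 n).1, (ha01 n).2]
    rw [h1]
    nlinarith [h2, hdc.2, (ha01 n).1]
  -- geometric tail bound
  have geo : ∀ m M : ℕ, ∑ j ∈ Finset.Icc m M, θ ^ j ≤ θ ^ m * (1 - θ)⁻¹ := by
    intro m M
    have h1θ : (0:ℝ) < 1 - θ := by linarith
    have hθne : θ ≠ 1 := ne_of_lt hθ1
    rcases le_or_gt m (M + 1) with h | h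
    · rw [← Finset.Ico_add_one_right_eq_Icc, Finset.sum_Ico_eq_sub _ h, geom_sum_eq hθne,
        geom_sum_eq hθne, div_sub_div_same, div_le_iff_of_neg (by linarith : θ - 1 < 0)]
      have e : θ ^ m * (1 - θ)⁻¹ * (θ - 1) = -θ ^ m := by
        field_simp
        ring
      rw [e]
      have := pow_nonneg hθ0.le (M + 1)
      linarith
    · rw [Finset.Icc_eq_empty (by omega)]
      simp only [Finset.sum_empty]
      positivity
  -- the dominating sequence
  set g1 : ℕ → ℝ := fun n => ((Real.sqrt n + 1) / n) * ((n * u n) ^ 2 + 5 * C) with hg1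
  set g2 : ℕ → ℝ := fun n =>
    C * (1 - θ)⁻¹ * Real.exp ((1 + 4 / ξ) * Real.log n + Real.log θ * (Real.log n) ^ 5) with hg2
  have h1θ : (0:ℝ) < 1 - θ := by linarith
  -- main bound
  have sumbound : ∀ n : ℕ, 1 ≤ n → (n : ℝ) *
      ∑ j ∈ Finset.Icc ⌈(Real.log n) ^ 5⌉₊ ⌊Real.sqrt n⌋₊,
        (μ (U n ∩ T^[j] ⁻¹' U n)).toReal ≤ g1 n + g2 n := by
    intro n hn
    have hn0 : (0:ℝ) < n := by exact_mod_cast hn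
    set m := ⌈(Real.log n) ^ 5⌉₊ with hm
    set M := ⌊Real.sqrt n⌋₊ with hM
    set c : ℝ := u n ^ 2 + 5 * (C * (n : ℝ) ^ (-2 : ℝ)) with hc
    have hc0 : 0 ≤ c := by
      have : (0:ℝ) ≤ (n:ℝ) ^ (-2:ℝ) := Real.rpow_nonneg hn0.le _
      nlinarith [sq_nonneg (u n), hC.le]
    have hCK2 : 0 ≤ C * K n ^ 2 := mul_nonneg hC.le (sq_nonneg _)
    have hcard : ((Finset.Icc m M).card : ℝ) ≤ Real.sqrt n + 1 := by
      rw [Nat.card_Icc]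
      have h1 : (M + 1 - m : ℕ) ≤ M + 1 := Nat.sub_le _ _
      have h2 : ((M + 1 - m : ℕ) : ℝ) ≤ ((M + 1 : ℕ) : ℝ) := by exact_mod_cast h1
      have h3 : ((M : ℕ) : ℝ) ≤ Real.sqrt n := Nat.floor_le (Real.sqrt_nonneg _)
      push_cast at h2 ⊢
      linarith
    have step1 : ∑ j ∈ Finset.Icc m M, (μ (U n ∩ T^[j] ⁻¹' U n)).toReal ≤
        (Real.sqrt n + 1) * c + C * K n ^ 2 * (θ ^ m * (1 - θ)⁻¹) := by
      calc ∑ j ∈ Finset.Icc m M, (μ (U n ∩ T^[j] ⁻¹' U n)).toReal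
          ≤ ∑ j ∈ Finset.Icc m M, (c + C * K n ^ 2 * θ ^ j) := by
            refine Finset.sum_le_sum (fun j _ => ?_)
            have := key n j
            rw [hc]; linarith [this]
        _ = (Finset.Icc m M).card * c + C * K n ^ 2 * ∑ j ∈ Finset.Icc m M, θ ^ j := by
            rw [Finset.sum_add_distrib, Finset.sum_const, nsmul_eq_mul, ← Finset.mul_sum]
        _ ≤ (Real.sqrt n + 1) * c + C * K n ^ 2 * (θ ^ m * (1 - θ)⁻¹) := by
            refine add_le_add (mul_le_mul_of_nonneg_right hcard hc0)
              (mul_le_mul_of_nonneg_left (geo m M) hCK2)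
    have step2 : (n : ℝ) * ((Real.sqrt n + 1) * c) = g1 n := by
      rw [hg1, hc]
      have e2 : (n:ℝ) ^ (-2:ℝ) = ((n:ℝ)^2)⁻¹ := by
        rw [show ((-2:ℝ)) = ((-2 : ℤ) : ℝ) by norm_num, Real.rpow_intCast]
        simp [zpow_ofNat]
      rw [e2]
      field_simp
    have step3 : (n : ℝ) * (C * K n ^ 2 * (θ ^ m * (1 - θ)⁻¹)) ≤ g2 n := by
      have hnK : (n : ℝ) * K n ^ 2 = Real.exp ((1 + 4 / ξ) * Real.log n) := by
        have e1 : K n ^ 2 = (n:ℝ) ^ (4 / ξ) := by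
          rw [hK]
          rw [← Real.rpow_natCast ((n:ℝ) ^ (2/ξ)) 2, ← Real.rpow_mul hn0.le]
          norm_num
          ring_nf
        rw [e1]
        nth_rewrite 1 [← Real.rpow_one (n:ℝ)]
        rw [← Real.rpow_add hn0, Real.rpow_def_of_pos hn0]
        ring_nf
      have hθm : θ ^ m ≤ Real.exp (Real.log θ * (Real.log n) ^ 5) := by
        have h1 : θ ^ m = θ ^ ((m : ℕ) : ℝ) := by rw [Real.rpow_natCast]
        have h2 : θ ^ ((m : ℕ) : ℝ) ≤ θ ^ ((Real.log n) ^ 5) :=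
          Real.rpow_le_rpow_of_exponent_ge hθ0 hθ1.le (Nat.le_ceil _)
        rw [h1]
        calc θ ^ ((m : ℕ) : ℝ) ≤ θ ^ ((Real.log n) ^ 5) := h2
          _ = Real.exp (Real.log θ * (Real.log n) ^ 5) := by
              rw [Real.rpow_def_of_pos hθ0]
      simp only [hg2]
      have hnn : (0:ℝ) ≤ (n:ℝ) * K n ^ 2 :=
        mul_nonneg hn0.le (sq_nonneg _)
      have h3 : (n : ℝ) * (C * K n ^ 2 * (θ ^ m * (1 - θ)⁻¹)) =
          C * (1 - θ)⁻¹ * (((n : ℝ) * K n ^ 2) * θ ^ m) := by ring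
      rw [h3, Real.exp_add, hnK]
      have h4 : Real.exp ((1 + 4 / ξ) * Real.log n) * θ ^ m ≤
          Real.exp ((1 + 4 / ξ) * Real.log n) * Real.exp (Real.log θ * (Real.log n) ^ 5) :=
        mul_le_mul_of_nonneg_left hθm (Real.exp_nonneg _)
      have h5 : 0 ≤ C * (1 - θ)⁻¹ := mul_nonneg hC.le (inv_nonneg.2 h1θ.le)
      exact mul_le_mul_of_nonneg_left h4 h5
    calc (n : ℝ) * ∑ j ∈ Finset.Icc m M, (μ (U n ∩ T^[j] ⁻¹' U n)).toReal
        ≤ (n : ℝ) * ((Real.sqrt n + 1) * c + C * K n ^ 2 * (θ ^ m * (1 - θ)⁻¹)) :=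
          mul_le_mul_of_nonneg_left step1 hn0.le
      _ = (n : ℝ) * ((Real.sqrt n + 1) * c) + (n : ℝ) * (C * K n ^ 2 * (θ ^ m * (1 - θ)⁻¹)) := by
          ring
      _ ≤ g1 n + g2 n := by
          rw [step2]; exact add_le_add (le_refl _) step3
  -- limits of the dominating sequence
  have hg1lim : Tendsto g1 atTop (nhds 0) := by
    have hs : Tendsto (fun n : ℕ => (Real.sqrt n + 1) / n) atTop (nhds 0) := by
      have hA' : Tendsto (fun n : ℕ => (Real.sqrt n)⁻¹) atTop (nhds 0) := by
        apply Tendsto.inv_tendsto_atTop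
        have : Tendsto Real.sqrt atTop atTop := by
          rw [show Real.sqrt = fun x : ℝ => x ^ (1/2 : ℝ) from funext fun x => Real.sqrt_eq_rpow x]
          exact tendsto_rpow_atTop (by norm_num)
        exact this.comp tendsto_natCast_atTop_atTop
      have hB' : Tendsto (fun n : ℕ => ((n : ℝ))⁻¹) atTop (nhds 0) :=
        tendsto_inv_atTop_nhds_zero_nat
      have := hA'.add hB'
      rw [add_zero] at this
      refine this.congr' ?_
      filter_upwards [eventually_ge_atTop 1] with n hn
      have hn0 : (0:ℝ) < n := by exact_mod_cast hn
      have hs0 : (0:ℝ) < Real.sqrt n := Real.sqrt_pos.2 hn0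
      have hsq : Real.sqrt n * Real.sqrt n = (n:ℝ) := Real.mul_self_sqrt hn0.le
      rw [← hsq]
      field_simp
      rw [Real.sqrt_sq hs0.le]; ring
    have hp : Tendsto (fun n : ℕ => ((n : ℝ) * u n) ^ 2 + 5 * C) atTop (nhds (1 + 5 * C)) := by
      have := (hU1.pow 2).add (tendsto_const_nhds (x := 5 * C))
      simpa using this
    have := hs.mul hp
    rw [zero_mul] at this
    exact this
  have hg2lim : Tendsto g2 atTop (nhds 0) := by
    have hlog : Tendsto (fun n : ℕ => Real.log n) atTop atTop :=
      Real.tendsto_log_atTop.comp tendsto_natCast_atTop_atTop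
    have harg : Tendsto (fun L : ℝ => (1 + 4 / ξ) * L + Real.log θ * L ^ 5) atTop atBot := by
      have hlt : Real.log θ < 0 := Real.log_neg hθ0 hθ1
      have h4 : Tendsto (fun L : ℝ => L ^ 4) atTop atTop := tendsto_pow_atTop (by norm_num)
      have h5 : Tendsto (fun L : ℝ => Real.log θ * L ^ 4) atTop atBot :=
        h4.const_mul_atTop_of_neg hlt
      have h6 : Tendsto (fun L : ℝ => (1 + 4 / ξ) + Real.log θ * L ^ 4) atTop atBot := by
        simpa using tendsto_atBot_add_const_left atTop (1 + 4 / ξ) h5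
      have h7 : Tendsto (fun L : ℝ => L * ((1 + 4 / ξ) + Real.log θ * L ^ 4)) atTop atBot :=
        Tendsto.atTop_mul_atBot₀ tendsto_id h6
      refine h7.congr (fun L => by ring)
    have hexp : Tendsto (fun n : ℕ =>
        Real.exp ((1 + 4 / ξ) * Real.log n + Real.log θ * (Real.log n) ^ 5)) atTop (nhds 0) :=
      Real.tendsto_exp_atBot.comp (harg.comp hlog)
    have := hexp.const_mul (C * (1 - θ)⁻¹)
    rw [mul_zero] at this
    exact this
  have hglim : Tendsto (fun n => g1 n + g2 n) atTop (nhds 0) := by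
    have := hg1lim.add hg2lim
    rw [add_zero] at this
    exact this
  refine squeeze_zero' ?_ ?_ hglim
  · filter_upwards with n
    exact mul_nonneg (Nat.cast_nonneg n)
      (Finset.sum_nonneg fun j _ => ENNReal.toReal_nonneg)
  · filter_upwards [eventually_ge_atTop 1] with n hn
    exact sumbound n hn
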